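/- Let G be a finite group and let H ≤ K be subgroups of G with K ≠ G. Consider the transitive actions of G by right multiplication on the coset spaces G/H and G/K. Then m(G acting on G/K) ≤ m(G acting on G/H) ≤ |K : H| · m(G acting on G/K). -/

import Mathlib

open Pointwise

/-- A subset `A` of `Ω` is *non-self-separable* for the action of `G` if every translate
`g • A` meets `A`. -/
def NonSelfSep (G : Type*) [Group G] {Ω : Type*} [MulAction G Ω] (A : Set Ω) : Prop :=
  ∀ g : G, (A ∩ g • A).Nonempty

/-- `mParam G Ω` is the minimum cardinality of a non-self-separable subset of `Ω`. -/
noncomputable def mParam (G Ω : Type*) [Group G] [MulAction G Ω] : ℕ :=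
  sInf {k | ∃ A : Set Ω, A.ncard = k ∧ NonSelfSep G A}

section Aux

variable {G : Type*} [Group G] {H K : Subgroup G} (hHK : H ≤ K)

lemma qmap_smul (g : G) (x : G ⧸ H) :
    Subgroup.quotientMapOfLE hHK (g • x) = g • Subgroup.quotientMapOfLE hHK x := by
  induction x using Quotient.ind'
  rfl

lemma qmap_surj : Function.Surjective (Subgroup.quotientMapOfLE hHK) := by
  intro y
  induction y using Quotient.ind' with
  | _ a => exact ⟨QuotientGroup.mk a, rfl⟩

lemma qmap_fst (x : G ⧸ H) :
    (Subgroup.quotientEquivProdOfLE hHK x).1 = Subgroup.quotientMapOfLE hHK x := by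
  induction x using Quotient.ind'
  rfl

lemma card_preimage [Finite G] (B : Set (G ⧸ K)) :
    (Subgroup.quotientMapOfLE hHK ⁻¹' B).ncard = H.relIndex K * B.ncard := by
  classical
  have h1 : Subgroup.quotientMapOfLE hHK ⁻¹' B
      = Subgroup.quotientEquivProdOfLE hHK ⁻¹'
        (B ×ˢ (Set.univ : Set (K ⧸ H.subgroupOf K))) := by
    ext x
    rw [Set.mem_preimage, Set.mem_preimage, Set.mem_prod]
    simp only [Set.mem_univ, and_true]
    rw [qmap_fst]
  rw [h1, ← Nat.card_coe_set_eq,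
    ← Equiv.image_symm_eq_preimage (Subgroup.quotientEquivProdOfLE hHK),
    Nat.card_image_of_injective (Equiv.injective _),
    Nat.card_congr (Equiv.Set.prod _ _), Nat.card_prod,
    Nat.card_congr (Equiv.Set.univ _), Nat.card_coe_set_eq, mul_comm]
  rfl

/-- pushforward of a non-self-separable set -/
lemma nss_image {A : Set (G ⧸ H)} (hA : NonSelfSep G A) :
    NonSelfSep G (Subgroup.quotientMapOfLE hHK '' A) := by
  intro g
  obtain ⟨x, hx, hgx⟩ := hA g
  obtain ⟨a, ha, rfl⟩ := hgx
  refine ⟨Subgroup.quotientMapOfLE hHK (g • a), ⟨g • a, hx, rfl⟩, ?_⟩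
  rw [qmap_smul]
  exact Set.smul_mem_smul_set ⟨a, ha, rfl⟩

lemma nss_preimage {B : Set (G ⧸ K)} (hB : NonSelfSep G B) :
    NonSelfSep G (Subgroup.quotientMapOfLE hHK ⁻¹' B) := by
  intro g
  obtain ⟨y, hy, hgy⟩ := hB g
  obtain ⟨x, rfl⟩ := qmap_surj hHK y
  refine ⟨x, hy, ?_⟩
  rw [Set.mem_smul_set_iff_inv_smul_mem, Set.mem_preimage, qmap_smul]
  rwa [Set.mem_smul_set_iff_inv_smul_mem] at hgy

end Aux

lemma nss_univ (G : Type*) [Group G] (Ω : Type*) [MulAction G Ω] [Nonempty Ω] :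
    NonSelfSep G (Set.univ : Set Ω) := by
  intro g
  rw [Set.smul_set_univ, Set.univ_inter]
  exact Set.univ_nonempty

lemma mParam_mem (G : Type*) [Group G] (Ω : Type*) [MulAction G Ω] [Nonempty Ω] :
    ∃ A : Set Ω, A.ncard = mParam G Ω ∧ NonSelfSep G A :=
  by
  have h : {k | ∃ A : Set Ω, A.ncard = k ∧ NonSelfSep G A}.Nonempty :=
    ⟨_, Set.univ, rfl, nss_univ G Ω⟩
  exact Nat.sInf_mem h

/-- Let `G` be a finite group and `H ≤ K ≤ G` with `K ≠ G`.  For the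
transitive actions of `G` on the coset spaces `G/H` and `G/K` one has
`m(G ↷ G/K) ≤ m(G ↷ G/H) ≤ |K : H| · m(G ↷ G/K)`. -/
theorem stmt7 (G : Type*) [Group G] [Finite G]
    (H K : Subgroup G) (hHK : H ≤ K) (hK : K ≠ ⊤) :
    mParam G (G ⧸ K) ≤ mParam G (G ⧸ H) ∧
      mParam G (G ⧸ H) ≤ H.relIndex K * mParam G (G ⧸ K) := by
  constructor
  · obtain ⟨A, hcard, hA⟩ := mParam_mem G (G ⧸ H)
    calc mParam G (G ⧸ K) ≤ (Subgroup.quotientMapOfLE hHK '' A).ncard :=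
          Nat.sInf_le ⟨_, rfl, nss_image hHK hA⟩
      _ ≤ A.ncard := Set.ncard_image_le A.toFinite
      _ = mParam G (G ⧸ H) := hcard
  · obtain ⟨B, hcard, hB⟩ := mParam_mem G (G ⧸ K)
    calc mParam G (G ⧸ H) ≤ (Subgroup.quotientMapOfLE hHK ⁻¹' B).ncard :=
          Nat.sInf_le ⟨_, rfl, nss_preimage hHK hB⟩
      _ = H.relIndex K * mParam G (G ⧸ K) := by rw [card_preimage hHK, hcard]
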